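/- Let P⊥ be an orthogonal projection matrix on ℝ^d, let b ∈ ℝ^d satisfy P⊥ b = b, let t > 0, and let μ be a probability measure on ℝ^d with ∫‖z‖ dμ(z) < ∞ such that P⊥ z = b for μ-almost every z. Define p_t(x) = ∫ φ_t(x−z) dμ(z), where φ_t is the density of N(0, tI_d). Then p_t is positive and differentiable, and for all x ∈ ℝ^d, P⊥ · ∇ log p_t(x) = (1/t) · P⊥ (b − x). -/

import Mathlib

open MeasureTheory Matrix InnerProductSpace

/-- Identify Euclidean space with the plain function type `ℝ^d`. -/
noncomputable def ofEuc {n : ℕ} (v : EuclideanSpace ℝ (Fin n)) : Fin n → ℝ :=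
  WithLp.equiv 2 (Fin n → ℝ) v

/-- The density of the Gaussian distribution `N(0, t I_d)` on `ℝ^d`. -/
noncomputable def gaussDensity (d : ℕ) (t : ℝ) (u : EuclideanSpace ℝ (Fin d)) : ℝ :=
  (2 * Real.pi * t) ^ (-(d : ℝ) / 2) * Real.exp (-‖u‖ ^ 2 / (2 * t))

lemma gauss_pos {d : ℕ} {t : ℝ} (ht : 0 < t) (u : EuclideanSpace ℝ (Fin d)) :
    0 < gaussDensity d t u := by
  have := Real.pi_pos
  unfold gaussDensity
  positivity

lemma gauss_le {d : ℕ} {t : ℝ} (ht : 0 < t) (u : EuclideanSpace ℝ (Fin d)) :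
    gaussDensity d t u ≤ (2 * Real.pi * t) ^ (-(d : ℝ) / 2) := by
  have := Real.pi_pos
  have h1 : Real.exp (-‖u‖ ^ 2 / (2 * t)) ≤ 1 := by
    rw [Real.exp_le_one_iff]
    have : (0:ℝ) ≤ ‖u‖^2 := by positivity
    rw [div_nonpos_iff]; right; constructor <;> nlinarith
  calc gaussDensity d t u ≤ (2 * Real.pi * t) ^ (-(d : ℝ) / 2) * 1 := by
        unfold gaussDensity
        apply mul_le_mul_of_nonneg_left h1 (by positivity)
    _ = _ := mul_one _

lemma gauss_mul_norm_le {d : ℕ} {t : ℝ} (ht : 0 < t) (u : EuclideanSpace ℝ (Fin d)) :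
    gaussDensity d t u * ‖u‖ ≤ (2 * Real.pi * t) ^ (-(d : ℝ) / 2) * Real.sqrt (2 * t) := by
  have := Real.pi_pos
  unfold gaussDensity
  rw [mul_assoc]
  apply mul_le_mul_of_nonneg_left _ (by positivity)
  set r := ‖u‖ with hr
  have hr0 : 0 ≤ r := norm_nonneg u
  set s := Real.sqrt (2 * t) with hs
  have hs2 : s ^ 2 = 2 * t := Real.sq_sqrt (by linarith)
  have hs0 : 0 < s := Real.sqrt_pos.2 (by linarith)
  have hexp : 1 + r ^ 2 / (2 * t) ≤ Real.exp (r ^ 2 / (2 * t)) := by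
    have := Real.add_one_le_exp (r ^ 2 / (2 * t)); linarith
  have key : r ≤ s * Real.exp (r ^ 2 / (2 * t)) := by
    have h2 : s * (1 + r ^ 2 / (2 * t)) ≤ s * Real.exp (r ^ 2 / (2 * t)) :=
      mul_le_mul_of_nonneg_left hexp hs0.le
    have h3 : r ≤ s * (1 + r ^ 2 / (2 * t)) := by
      rw [← hs2]
      have hss : s * (1 + r ^ 2 / s ^ 2) = s + r ^ 2 / s := by field_simp
      rw [hss]
      have hds : r ^ 2 / s * s = r ^ 2 := div_mul_cancel₀ _ hs0.ne'
      nlinarith [sq_nonneg (r - s), hds, hs0, hr0]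
    linarith
  have hmul : Real.exp (-r ^ 2 / (2 * t)) * Real.exp (r ^ 2 / (2 * t)) = 1 := by
    rw [← Real.exp_add]; ring_nf; exact Real.exp_zero
  calc Real.exp (-r ^ 2 / (2 * t)) * r
      ≤ Real.exp (-r ^ 2 / (2 * t)) * (s * Real.exp (r ^ 2 / (2 * t))) :=
        mul_le_mul_of_nonneg_left key (Real.exp_pos _).le
    _ = s * (Real.exp (-r ^ 2 / (2 * t)) * Real.exp (r ^ 2 / (2 * t))) := by ring
    _ = s := by rw [hmul, mul_one]

lemma gauss_hasFDerivAt {d : ℕ} {t : ℝ} (ht : 0 < t) (z x : EuclideanSpace ℝ (Fin d)) :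
    HasFDerivAt (fun x => gaussDensity d t (x - z))
      (toDual ℝ (EuclideanSpace ℝ (Fin d))
        ((-(gaussDensity d t (x - z)) / t) • (x - z))) x := by
  have h1 : HasFDerivAt (fun x : EuclideanSpace ℝ (Fin d) => x - z)
      (ContinuousLinearMap.id ℝ (EuclideanSpace ℝ (Fin d))) x :=
    (hasFDerivAt_id x).sub_const z
  have h2 := h1.norm_sq
  have h3 := h2.const_mul (-(1 / (2 * t)))
  have h4 := h3.exp
  have h5 := h4.const_mul ((2 * Real.pi * t) ^ (-(d : ℝ) / 2))
  have hfun : (fun x : EuclideanSpace ℝ (Fin d) =>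
      (2 * Real.pi * t) ^ (-(d : ℝ) / 2) * Real.exp (-(1 / (2 * t)) * ‖x - z‖ ^ 2))
      = fun x => gaussDensity d t (x - z) := by
    funext y; unfold gaussDensity; ring_nf
  rw [hfun] at h5
  refine h5.congr_fderiv ?_
  ext w
  simp only [toDual_apply_apply, ContinuousLinearMap.smul_apply, ContinuousLinearMap.coe_smul',
    Pi.smul_apply, ContinuousLinearMap.coe_comp', Function.comp_apply,
    ContinuousLinearMap.coe_id', id_eq, smul_eq_mul, two_smul, ContinuousLinearMap.add_apply,
    innerSL_apply_apply]
  rw [real_inner_smul_left]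
  unfold gaussDensity
  ring_nf

/-- if `P⊥` is an orthogonal projection matrix, `P⊥ b = b`, `t > 0`, and
`μ` is a probability measure with finite first moment supported on `{z : P⊥ z = b}`,
then the heat-kernel smoothing `p_t(x) = ∫ φ_t(x−z) dμ(z)` is positive and
differentiable and its score satisfies `P⊥ ∇ log p_t(x) = (1/t) P⊥ (b − x)`. -/
theorem stmt2 (d : ℕ) (Pperp : Matrix (Fin d) (Fin d) ℝ)
    (hproj : Pperp * Pperp = Pperp) (hsymm : Pperpᵀ = Pperp)
    (b : Fin d → ℝ) (hb : Pperp.mulVec b = b)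
    (t : ℝ) (ht : 0 < t)
    (μ : Measure (EuclideanSpace ℝ (Fin d))) [IsProbabilityMeasure μ]
    (hmom : Integrable (fun z => ‖z‖) μ)
    (hsupp : ∀ᵐ z ∂μ, Pperp.mulVec (ofEuc z) = b)
    (pt : EuclideanSpace ℝ (Fin d) → ℝ)
    (hpt : pt = fun x => ∫ z, gaussDensity d t (x - z) ∂μ) :
    (∀ x, 0 < pt x) ∧ Differentiable ℝ pt ∧
      ∀ x, Pperp.mulVec (ofEuc (gradient (fun y => Real.log (pt y)) x))
        = (1 / t) • Pperp.mulVec (b - ofEuc x) := by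
  set C : ℝ := (2 * Real.pi * t) ^ (-(d : ℝ) / 2) with hC
  have hpi := Real.pi_pos
  have hCpos : 0 < C := by rw [hC]; positivity
  -- continuity of the Gaussian density
  have cont_g : Continuous (gaussDensity d t) := by
    have h1 : Continuous fun u : EuclideanSpace ℝ (Fin d) => -‖u‖ ^ 2 / (2 * t) := by fun_prop
    exact continuous_const.mul (Real.continuous_exp.comp h1)
  have meas : ∀ x : EuclideanSpace ℝ (Fin d), AEStronglyMeasurable (fun z : EuclideanSpace ℝ (Fin d) => gaussDensity d t (x - z)) μ :=
    fun x => (cont_g.comp (continuous_const.sub continuous_id)).aestronglyMeasurable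
  have hint : ∀ x : EuclideanSpace ℝ (Fin d), Integrable (fun z : EuclideanSpace ℝ (Fin d) => gaussDensity d t (x - z)) μ := by
    intro x
    refine (integrable_const C).mono' (meas x) ?_
    filter_upwards with z
    rw [Real.norm_eq_abs, abs_of_pos (gauss_pos ht _)]
    exact gauss_le ht _
  -- positivity
  have hpos : ∀ x, 0 < pt x := by
    intro x
    rw [hpt]
    rw [integral_pos_iff_support_of_nonneg_ae
      (Filter.Eventually.of_forall fun z => (gauss_pos ht _).le) (hint x)]
    have hsup : Function.support (fun z : EuclideanSpace ℝ (Fin d) => gaussDensity d t (x - z)) = Set.univ :=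
      Set.eq_univ_of_forall fun z => (gauss_pos ht (x - z)).ne'
    rw [hsup]
    simp
  -- the gradient integrand
  set vec : EuclideanSpace ℝ (Fin d) → EuclideanSpace ℝ (Fin d) → EuclideanSpace ℝ (Fin d) := fun x z => (-(gaussDensity d t (x - z)) / t) • (x - z) with hvec
  have vec_cont : ∀ x : EuclideanSpace ℝ (Fin d), Continuous (vec x) := by
    intro x
    apply Continuous.smul (f := fun z => -(gaussDensity d t (x - z)) / t) (g := fun z => x - z)
    · fun_prop
    · exact continuous_const.sub continuous_id
  have vec_bound : ∀ x z : EuclideanSpace ℝ (Fin d), ‖vec x z‖ ≤ C / t * Real.sqrt (2 * t) := by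
    intro x z
    rw [hvec]
    simp only [norm_smul, Real.norm_eq_abs]
    rw [abs_div, abs_neg, abs_of_pos (gauss_pos ht _), abs_of_pos ht]
    rw [div_mul_eq_mul_div, div_mul_eq_mul_div, div_le_div_iff_of_pos_right ht]
    exact gauss_mul_norm_le ht _
  have vec_int : ∀ x : EuclideanSpace ℝ (Fin d), Integrable (vec x) μ := by
    intro x
    refine (integrable_const (C / t * Real.sqrt (2 * t))).mono'
      (vec_cont x).aestronglyMeasurable ?_
    filter_upwards with z using vec_bound x z
  -- differentiation under the integral sign
  have hgrad : ∀ x : EuclideanSpace ℝ (Fin d), HasGradientAt pt (∫ z, vec x z ∂μ) x := by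
    intro x
    have key : HasFDerivAt (fun x : EuclideanSpace ℝ (Fin d) => ∫ z, gaussDensity d t (x - z) ∂μ)
        (∫ z, toDual ℝ (EuclideanSpace ℝ (Fin d)) (vec x z) ∂μ) x := by
      apply hasFDerivAt_integral_of_dominated_of_fderiv_le
        (F' := fun x z => toDual ℝ (EuclideanSpace ℝ (Fin d)) (vec x z)) (bound := fun _ => C / t * Real.sqrt (2 * t))
        (s := Metric.ball x 1) (Metric.ball_mem_nhds x one_pos)
      · exact Filter.Eventually.of_forall fun x' => meas x'
      · exact hint x
      · exact (((toDual ℝ (EuclideanSpace ℝ (Fin d))).continuous.comp (vec_cont x))).aestronglyMeasurable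
      · filter_upwards with z
        intro x' _
        rw [LinearIsometryEquiv.norm_map]
        exact vec_bound x' z
      · exact integrable_const _
      · filter_upwards with z
        intro x' _
        exact gauss_hasFDerivAt ht z x'
    have hcomm : ∫ z, toDual ℝ (EuclideanSpace ℝ (Fin d)) (vec x z) ∂μ = toDual ℝ (EuclideanSpace ℝ (Fin d)) (∫ z, vec x z ∂μ) := by
      have := ((toDual ℝ (EuclideanSpace ℝ (Fin d))).toLinearIsometry.toContinuousLinearMap).integral_comp_comm
        (vec_int x)
      exact this
    rw [hasGradientAt_iff_hasFDerivAt, hpt]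
    rw [hcomm] at key
    exact key
  have hdiff : Differentiable ℝ pt := fun x =>
    ((hgrad x).hasFDerivAt).differentiableAt
  refine ⟨hpos, hdiff, ?_⟩
  intro x
  -- gradient of the log
  have hloggrad : HasGradientAt (fun y => Real.log (pt y))
      ((pt x)⁻¹ • ∫ z, vec x z ∂μ) x := by
    have h1 := (hgrad x).hasFDerivAt
    have h2 := (Real.hasDerivAt_log (hpos x).ne').comp_hasFDerivAt x h1
    rw [hasGradientAt_iff_hasFDerivAt]
    refine h2.congr_fderiv ?_
    simp
  rw [hloggrad.gradient]
  -- push the linear map through the integral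
  set L : EuclideanSpace ℝ (Fin d) →L[ℝ] (Fin d → ℝ) := LinearMap.toContinuousLinearMap
    (Pperp.mulVecLin ∘ₗ (WithLp.linearEquiv 2 ℝ (Fin d → ℝ)).toLinearMap) with hL
  have hLapp : ∀ v : EuclideanSpace ℝ (Fin d), L v = Pperp.mulVec (ofEuc v) := fun v => rfl
  have key1 : Pperp.mulVec (ofEuc ((pt x)⁻¹ • ∫ z, vec x z ∂μ))
      = (pt x)⁻¹ • L (∫ z, vec x z ∂μ) := by
    rw [← hLapp, L.map_smul]
  have key2 : L (∫ z, vec x z ∂μ) = ∫ z, L (vec x z) ∂μ :=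
    (L.integral_comp_comm (vec_int x)).symm
  have key3 : ∫ z, L (vec x z) ∂μ
      = ∫ z, (-(gaussDensity d t (x - z)) / t) • (Pperp.mulVec (ofEuc x) - b) ∂μ := by
    apply integral_congr_ae
    filter_upwards [hsupp] with z hz
    show L ((-(gaussDensity d t (x - z)) / t) • (x - z)) = _
    rw [L.map_smul, hLapp]
    congr 1
    have : ofEuc (x - z) = ofEuc x - ofEuc z := rfl
    rw [this, Matrix.mulVec_sub, hz]
  have key4 : ∫ z, (-(gaussDensity d t (x - z)) / t) • (Pperp.mulVec (ofEuc x) - b) ∂μ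
      = (-(pt x) / t) • (Pperp.mulVec (ofEuc x) - b) := by
    rw [integral_smul_const]
    congr 1
    rw [hpt]
    rw [integral_div]
    congr 1
    rw [integral_neg]
  rw [key1, key2, key3, key4, smul_smul]
  have hptx := (hpos x).ne'
  have hscal : (pt x)⁻¹ * (-(pt x) / t) = -(1 / t) := by
    field_simp
  rw [hscal, Matrix.mulVec_sub, hb]
  rw [neg_smul, smul_sub, smul_sub, neg_sub]
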